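/- arXiv:2006.15301 — 4 statements merged into one kernel-verified Lean document; each statement's English description precedes it below -/
import Mathlib

section
/- Let g : ℝ → ℝ be continuously differentiable, and define the characteristic flow ξ_t(x) = x + t − 2·g(x)·t. Suppose T > 0 and ψ : ℝ × [0,T) → ℝ is continuously differentiable and satisfies ξ_t(ψ(x,t)) = x for all x ∈ ℝ and t ∈ [0,T). Then u(x,t) := g(ψ(x,t)) solves the Lighthill–Whitham–Richards equation ∂u/∂t + (1 − 2u)·∂u/∂x = 0 on ℝ × (0,T), with initial condition u(x,0) = g(x). -/
/-- If `ψ` is a C¹ inverse of the LWR characteristic flow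
`ξ t x = x + t - 2 * g x * t` on `ℝ × [0,T)`, then `u (x,t) = g (ψ (x,t))`
solves `u_t + (1 - 2u) u_x = 0` on `ℝ × (0,T)` with `u (x,0) = g x`. -/
theorem stmt_0 (g : ℝ → ℝ) (hg : ContDiff ℝ 1 g)
    (ξ : ℝ → ℝ → ℝ) (hξ : ∀ t x, ξ t x = x + t - 2 * g x * t)
    (T : ℝ) (hT : 0 < T)
    (ψ : ℝ × ℝ → ℝ)
    (hψ : ContDiffOn ℝ 1 ψ (Set.univ ×ˢ Set.Ico 0 T))
    (hinv : ∀ x t : ℝ, 0 ≤ t → t < T → ξ t (ψ (x, t)) = x) :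
    (∀ x : ℝ, g (ψ (x, 0)) = g x) ∧
    ∀ x t : ℝ, 0 < t → t < T →
      ∃ ut ux : ℝ,
        HasDerivAt (fun τ : ℝ => g (ψ (x, τ))) ut t ∧
        HasDerivAt (fun y : ℝ => g (ψ (y, t))) ux x ∧
        ut + (1 - 2 * g (ψ (x, t))) * ux = 0 := by
  constructor
  · intro x
    have h := hinv x 0 le_rfl hT
    rw [hξ] at h
    simp at h
    rw [h]
  · intro x t ht htT
    have hmem : Set.univ ×ˢ Set.Ico 0 T ∈ nhds (x, t) := by
      exact prod_mem_nhds Filter.univ_mem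
        (Filter.mem_of_superset (Ioo_mem_nhds ht htT) Set.Ioo_subset_Ico_self)
    have hdψ : DifferentiableAt ℝ ψ (x, t) :=
      (hψ.differentiableOn one_ne_zero).differentiableAt hmem
    have hfd := hdψ.hasFDerivAt
    set F := fderiv ℝ ψ (x, t) with hF
    set a := F (0, 1) with ha
    set b := F (1, 0) with hb
    have hdt : HasDerivAt (fun τ : ℝ => ψ (x, τ)) a t := by
      have h0 : HasDerivAt (fun τ : ℝ => ((x : ℝ), τ)) ((0 : ℝ), (1 : ℝ)) t :=
        HasDerivAt.prodMk (hasDerivAt_const t x) (hasDerivAt_id t)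
      exact hfd.comp_hasDerivAt t h0
    have hdx : HasDerivAt (fun y : ℝ => ψ (y, t)) b x := by
      have h0 : HasDerivAt (fun y : ℝ => (y, (t : ℝ))) ((1 : ℝ), (0 : ℝ)) x :=
        HasDerivAt.prodMk (hasDerivAt_id x) (hasDerivAt_const x t)
      exact hfd.comp_hasDerivAt x h0
    set p := ψ (x, t) with hp
    set D := deriv g p with hD
    have hgd : HasDerivAt g D p := ((hg.differentiable one_ne_zero) p).hasDerivAt
    have hgt : HasDerivAt (fun τ : ℝ => g (ψ (x, τ))) (D * a) t := hgd.comp t hdt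
    have hgx : HasDerivAt (fun y : ℝ => g (ψ (y, t))) (D * b) x := hgd.comp x hdx
    -- t-direction equation
    have h3 : HasDerivAt (fun τ : ℝ => ψ (x, τ) + τ - 2 * g (ψ (x, τ)) * τ)
        ((a + 1) - ((2 * (D * a)) * t + (2 * g p) * 1)) t := by
      exact (hdt.add (hasDerivAt_id t)).sub ((hgt.const_mul 2).mul (hasDerivAt_id t))
    have heq : (fun τ : ℝ => ψ (x, τ) + τ - 2 * g (ψ (x, τ)) * τ) =ᶠ[nhds t]
        (fun _ : ℝ => x) := by
      filter_upwards [Ioo_mem_nhds ht htT] with τ hτ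
      have := hinv x τ hτ.1.le hτ.2
      rw [hξ] at this
      linarith
    have h3' : HasDerivAt (fun _ : ℝ => x)
        ((a + 1) - ((2 * (D * a)) * t + (2 * g p) * 1)) t := h3.congr_of_eventuallyEq heq.symm
    have eq1 : (a + 1) - ((2 * (D * a)) * t + (2 * g p) * 1) = 0 :=
      h3'.unique (hasDerivAt_const t x)
    -- x-direction equation
    have h4 : HasDerivAt (fun y : ℝ => ψ (y, t) + t - 2 * g (ψ (y, t)) * t)
        (b - (2 * (D * b)) * t) x :=
      (hdx.add_const t).sub ((hgx.const_mul 2).mul_const t)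
    have h4' : HasDerivAt (fun y : ℝ => y) (b - (2 * (D * b)) * t) x := by
      apply h4.congr_of_eventuallyEq
      filter_upwards with y
      have := hinv y t ht.le htT
      rw [hξ] at this
      linarith
    have eq2 : b - (2 * (D * b)) * t = 1 := h4'.unique (hasDerivAt_id x)
    have hne : 1 - 2 * D * t ≠ 0 := by
      intro h
      have : b * (1 - 2 * D * t) = 1 := by linear_combination eq2
      rw [h, mul_zero] at this
      exact one_ne_zero this.symm
    have key : a + (1 - 2 * g p) * b = 0 := by
      have hmul : (a + (1 - 2 * g p) * b) * (1 - 2 * D * t) = 0 := by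
        linear_combination eq1 + (1 - 2 * g p) * eq2
      rcases mul_eq_zero.mp hmul with h | h
      · exact h
      · exact absurd h hne
    exact ⟨D * a, D * b, hgt, hgx, by linear_combination D * key⟩
end

section
/- Let w : ℝ → ℝ be differentiable with w(0) = 0. Then the function u(x,t) = (1 − x + t + w(t))/(1 + 2t + 2w(t)) satisfies the pathwise perturbed Lighthill–Whitham–Richards equation ∂u/∂t + (1 − 2u)·∂u/∂x + (1 − 2u)·∂u/∂x · w′(t) = 0 at every point (x,t) with 1 + 2t + 2w(t) ≠ 0, together with the initial condition u(x,0) = 1 − x. -/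
/-- For a differentiable path `w` with `w 0 = 0`, the function
`u (x,t) = (1 - x + t + w t)/(1 + 2t + 2 w t)` solves the pathwise perturbed LWR
equation `u_t + (1 - 2u) u_x + (1 - 2u) u_x · w' t = 0` wherever `1 + 2t + 2 w t ≠ 0`,
with `u (x,0) = 1 - x`. -/
theorem stmt_10 (w : ℝ → ℝ) (hw : Differentiable ℝ w) (hw0 : w 0 = 0) :
    (∀ x : ℝ, (1 - x + 0 + w 0) / (1 + 2 * 0 + 2 * w 0) = 1 - x) ∧
    ∀ x t : ℝ, 1 + 2 * t + 2 * w t ≠ 0 →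
      ∃ ut ux : ℝ,
        HasDerivAt (fun τ : ℝ => (1 - x + τ + w τ) / (1 + 2 * τ + 2 * w τ)) ut t ∧
        HasDerivAt (fun y : ℝ => (1 - y + t + w t) / (1 + 2 * t + 2 * w t)) ux x ∧
        ut + (1 - 2 * ((1 - x + t + w t) / (1 + 2 * t + 2 * w t))) * ux
          + (1 - 2 * ((1 - x + t + w t) / (1 + 2 * t + 2 * w t))) * ux * deriv w t
          = 0 := by
  constructor
  · intro x; rw [hw0]; norm_num
  · intro x t hD
    have hwt : HasDerivAt w (deriv w t) t := (hw t).hasDerivAt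
    set w' := deriv w t
    set N := 1 - x + t + w t with hN
    set D := 1 + 2 * t + 2 * w t with hDdef
    have hnum : HasDerivAt (fun τ : ℝ => 1 - x + τ + w τ) (1 + w') t := by
      have := ((hasDerivAt_id t).const_add (1 - x)).add hwt
      simpa [Pi.add_def] using this
    have hden : HasDerivAt (fun τ : ℝ => 1 + 2 * τ + 2 * w τ) (2 + 2 * w') t := by
      have := (((hasDerivAt_id t).const_mul 2).const_add 1).add (hwt.const_mul 2)
      simpa [Pi.add_def] using this
    have hut : HasDerivAt (fun τ : ℝ => (1 - x + τ + w τ) / (1 + 2 * τ + 2 * w τ))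
        (((1 + w') * D - N * (2 + 2 * w')) / D ^ 2) t := hnum.div hden hD
    have hux : HasDerivAt (fun y : ℝ => (1 - y + t + w t) / D) (-1 / D) x := by
      have h1 : HasDerivAt (fun y : ℝ => 1 - y + t + w t) (-1) x := by
        have := (((hasDerivAt_id x).const_sub 1)).add_const (t + w t)
        simpa [sub_add_eq_add_sub, add_assoc] using this
      simpa using h1.div_const D
    refine ⟨_, _, hut, hux, ?_⟩
    field_simp
    ring
end

section
/- Let w : ℝ → ℝ be differentiable with w(0) = 0. Then the function u(x,t) = 1 − ((√(8t·(w(t) + t + x) + 1) − 1)/(4t))² satisfies the pathwise perturbed equation ∂u/∂t + (1 − 2u)·∂u/∂x − ∂u/∂x · w′(t) = 0 at every point (x,t) with t > 0 and 8t·(w(t) + t + x) + 1 > 0. -/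
/-- For a differentiable path `w` with `w 0 = 0`, the function
`u (x,t) = 1 - ((√(8t(w t + t + x) + 1) - 1)/(4t))²` solves the pathwise perturbed
equation `u_t + (1 - 2u) u_x - u_x · w' t = 0` wherever `t > 0` and
`8t(w t + t + x) + 1 > 0`. -/
theorem stmt_13 (w : ℝ → ℝ) (hw : Differentiable ℝ w) (hw0 : w 0 = 0) :
    ∀ x t : ℝ, 0 < t → 0 < 8 * t * (w t + t + x) + 1 →
      ∃ ut ux : ℝ,
        HasDerivAt (fun τ : ℝ =>
          1 - ((Real.sqrt (8 * τ * (w τ + τ + x) + 1) - 1) / (4 * τ)) ^ 2) ut t ∧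
        HasDerivAt (fun y : ℝ =>
          1 - ((Real.sqrt (8 * t * (w t + t + y) + 1) - 1) / (4 * t)) ^ 2) ux x ∧
        ut + (1 - 2 * (1 - ((Real.sqrt (8 * t * (w t + t + x) + 1) - 1) / (4 * t)) ^ 2))
            * ux - ux * deriv w t = 0 := by
  intro x t ht hs
  set r := Real.sqrt (8 * t * (w t + t + x) + 1) with hrdef
  have hr : 0 < r := Real.sqrt_pos.mpr hs
  have hr2 : r ^ 2 = 8 * t * (w t + t + x) + 1 := Real.sq_sqrt hs.le
  set W := deriv w t with hWdef
  -- spatial derivative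
  have ha : HasDerivAt (fun y : ℝ => 8 * t * (w t + t + y) + 1) (8 * t) x := by
    have h1 : HasDerivAt (fun y : ℝ => 8 * t * (w t + t + y) + 1) (8 * t * 1) x :=
      (((hasDerivAt_id x).const_add (w t + t)).const_mul (8 * t)).add_const 1
    simpa using h1
  have hsqx : HasDerivAt (fun y : ℝ => Real.sqrt (8 * t * (w t + t + y) + 1))
      (1 / (2 * r) * (8 * t)) x := by
    have := (Real.hasDerivAt_sqrt hs.ne').comp x ha
    simpa [Function.comp_def, hrdef] using this
  have hux : HasDerivAt (fun y : ℝ =>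
      1 - ((Real.sqrt (8 * t * (w t + t + y) + 1) - 1) / (4 * t)) ^ 2)
      (-(2 * ((r - 1) / (4 * t)) ^ 1 * (1 / (2 * r) * (8 * t) / (4 * t)))) x := by
    have := (((hsqx.sub_const 1).div_const (4 * t)).pow 2).const_sub 1
    simpa [hrdef] using this
  -- time derivative
  have hwt : HasDerivAt w W t := (hw t).hasDerivAt
  have hb : HasDerivAt (fun τ : ℝ => 8 * τ * (w τ + τ + x) + 1)
      (8 * (w t + t + x) + 8 * t * (W + 1)) t := by
    have h1 : HasDerivAt (fun τ : ℝ => w τ + τ + x) (W + 1) t :=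
      (hwt.add (hasDerivAt_id t)).add_const x
    have h2 : HasDerivAt (fun τ : ℝ => 8 * τ) 8 t := by
      simpa using (hasDerivAt_id t).const_mul (8 : ℝ)
    have := (h2.mul h1).add_const 1
    convert this using 1
    all_goals rfl
  have hsqt : HasDerivAt (fun τ : ℝ => Real.sqrt (8 * τ * (w τ + τ + x) + 1))
      (1 / (2 * r) * (8 * (w t + t + x) + 8 * t * (W + 1))) t := by
    have := (Real.hasDerivAt_sqrt hs.ne').comp t hb
    simpa [Function.comp_def, hrdef] using this
  have h4t : (4 : ℝ) * t ≠ 0 := by positivity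
  have hq : HasDerivAt (fun τ : ℝ =>
      (Real.sqrt (8 * τ * (w τ + τ + x) + 1) - 1) / (4 * τ))
      ((1 / (2 * r) * (8 * (w t + t + x) + 8 * t * (W + 1)) * (4 * t) -
        (r - 1) * 4) / (4 * t) ^ 2) t := by
    have hden : HasDerivAt (fun τ : ℝ => 4 * τ) 4 t := by
      simpa using (hasDerivAt_id t).const_mul (4 : ℝ)
    have := (hsqt.sub_const 1).div hden h4t
    simpa [hrdef, Pi.div_def] using this
  have hut : HasDerivAt (fun τ : ℝ =>
      1 - ((Real.sqrt (8 * τ * (w τ + τ + x) + 1) - 1) / (4 * τ)) ^ 2)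
      (-(2 * ((r - 1) / (4 * t)) ^ 1 *
        ((1 / (2 * r) * (8 * (w t + t + x) + 8 * t * (W + 1)) * (4 * t) -
          (r - 1) * 4) / (4 * t) ^ 2))) t := by
    have := (hq.pow 2).const_sub 1
    simpa [hrdef] using this
  refine ⟨_, _, hut, hux, ?_⟩
  have hrne : r ≠ 0 := hr.ne'
  have htne : t ≠ 0 := ht.ne'
  field_simp
  linear_combination (16 * r - 16) * hr2
end

section
/- Let s : ℝ → ℝ be differentiable with s(0) = 1. Then the function u(x,t) = (1 − x + t − s(t))/(2t − 1) satisfies the pathwise perturbed equation ∂u/∂t + (1 − 2u)·∂u/∂x − ∂u/∂x · s′(t) = 0 at every point (x,t) with t ≠ 1/2, together with the initial condition u(x,0) = x. -/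
/-- For a differentiable path `s` with `s 0 = 1`, the function
`u (x,t) = (1 - x + t - s t)/(2t - 1)` solves the pathwise perturbed equation
`u_t + (1 - 2u) u_x - u_x · s' t = 0` wherever `t ≠ 1/2`, with `u (x,0) = x`. -/
theorem stmt_16 (s : ℝ → ℝ) (hs : Differentiable ℝ s) (hs0 : s 0 = 1) :
    (∀ x : ℝ, (1 - x + 0 - s 0) / (2 * 0 - 1) = x) ∧
    ∀ x t : ℝ, t ≠ 1/2 →
      ∃ ut ux : ℝ,
        HasDerivAt (fun τ : ℝ => (1 - x + τ - s τ) / (2 * τ - 1)) ut t ∧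
        HasDerivAt (fun y : ℝ => (1 - y + t - s t) / (2 * t - 1)) ux x ∧
        ut + (1 - 2 * ((1 - x + t - s t) / (2 * t - 1))) * ux
          - ux * deriv s t = 0 := by
  constructor
  · intro x; rw [hs0]; ring
  · intro x t ht
    have hden : 2 * t - 1 ≠ 0 := by
      intro h; apply ht; linarith
    have hnum : HasDerivAt (fun τ : ℝ => 1 - x + τ - s τ) (1 - deriv s t) t := by
      have := ((hasDerivAt_id t).const_add (1 - x)).sub (hs t).hasDerivAt
      exact this
    have hg : HasDerivAt (fun τ : ℝ => 2 * τ - 1) 2 t := by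
      have := ((hasDerivAt_id t).const_mul 2).sub_const 1
      simpa using this
    have hut := hnum.div hg hden
    have hux : HasDerivAt (fun y : ℝ => (1 - y + t - s t) / (2 * t - 1))
        (-1 / (2 * t - 1)) x := by
      have h1 : HasDerivAt (fun y : ℝ => 1 - y + t - s t) (-1) x := by
        have := (((hasDerivAt_id x).const_sub 1).add_const t).sub_const (s t)
        simpa using this
      simpa using h1.div_const (2 * t - 1)
    refine ⟨_, _, hut, hux, ?_⟩
    field_simp
    ring
end
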